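/- Let q ≥ 2 and n ≥ 1 be integers and f : ℤ_q^n → ℤ_{2q}. Then f is 2q-negabent if and only if C_f(u) = 0 for all u ∈ ℤ_q^n with u ≠ 0. -/

import Mathlib

open Finset

/-- `ω = e^{πi/q}`, a primitive `2q`-th root of unity. -/
noncomputable def omg (q : ℕ) : ℂ := Complex.exp ((Real.pi : ℂ) * Complex.I / q)

/-- `ξ = e^{2πi/q}`, a primitive `q`-th root of unity. -/
noncomputable def xiq (q : ℕ) : ℂ := Complex.exp (2 * (Real.pi : ℂ) * Complex.I / q)

/-- The `2q`-nega-Hadamard transform of `f : ℤ_q^n → ℤ_{2q}` at `u ∈ ℤ_q^n`: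
`N_f(u) = q^{-n/2} Σ_x ω^{f(x)} ξ^{⟨x̂,û⟩} ω^{Σ_i x̂_i}`. -/
noncomputable def NHT (q n : ℕ) [NeZero q] (f : (Fin n → ZMod q) → ZMod (2 * q))
    (u : Fin n → ZMod q) : ℂ :=
  (Real.sqrt ((q : ℝ) ^ n) : ℂ)⁻¹ *
    ∑ x : Fin n → ZMod q,
      omg q ^ (f x).val * xiq q ^ (∑ i, (x i).val * (u i).val) * omg q ^ (∑ i, (x i).val)

/-- The `2q`-nega-crosscorrelation of `f, g : ℤ_q^m → ℤ_{2q}` at `u`: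
`C_{f,g}(u) = Σ_x ω^{f(x) − g(x+u)} (−1)^{n_q(x̂,û)}`. -/
noncomputable def negaCC (q m : ℕ) [NeZero q]
    (f g : (Fin m → ZMod q) → ZMod (2 * q)) (u : Fin m → ZMod q) : ℂ :=
  ∑ x : Fin m → ZMod q,
    omg q ^ (f x - g (x + u)).val *
      (-1 : ℂ) ^ (Finset.univ.filter (fun i => q ≤ (x i).val + (u i).val)).card

/-- `f` is `2q`-negabent (`|N_f(u)| = 1` for all `u`) iff its
`2q`-nega-autocorrelation vanishes at every nonzero `u`. -/
noncomputable def ee (q : ℕ) (k : ℤ) : ℂ := Complex.exp ((Real.pi : ℂ) * Complex.I * k / q)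

lemma ee_add (q : ℕ) (a b : ℤ) : ee q (a + b) = ee q a * ee q b := by
  rw [ee, ee, ee, ← Complex.exp_add]
  congr 1
  push_cast
  ring

lemma ee_zero (q : ℕ) : ee q 0 = 1 := by simp [ee]

lemma ee_ne_zero (q : ℕ) (k : ℤ) : ee q k ≠ 0 := Complex.exp_ne_zero _

lemma ee_nat_mul (q : ℕ) (a : ℤ) (m : ℕ) : ee q (a * m) = ee q a ^ m := by
  rw [ee, ee, ← Complex.exp_nat_mul]
  congr 1
  push_cast
  ring

lemma ee_two_pi (q : ℕ) (hq : q ≠ 0) (k : ℤ) : ee q (2 * q * k) = 1 := by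
  have hq' : (q : ℂ) ≠ 0 := by exact_mod_cast hq
  rw [ee]
  have : ((Real.pi : ℂ) * Complex.I * ((2 * q * k : ℤ) : ℂ) / q)
      = (k : ℂ) * (2 * Real.pi * Complex.I) := by
    push_cast
    field_simp
  rw [this, Complex.exp_int_mul, Complex.exp_eq_one_iff.2 ⟨1, by ring⟩, one_zpow]

lemma ee_dvd_eq (q : ℕ) (hq : q ≠ 0) {a b : ℤ} (h : (2 * q : ℤ) ∣ (a - b)) :
    ee q a = ee q b := by
  obtain ⟨k, hk⟩ := h
  have : a = b + 2 * q * k := by linarith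
  rw [this, ee_add, ee_two_pi q hq, mul_one]

lemma conj_ee (q : ℕ) (k : ℤ) : (starRingEnd ℂ) (ee q k) = ee q (-k) := by
  rw [ee, ee, ← Complex.exp_conj]
  congr 1
  simp [map_div₀, Complex.conj_I]

lemma ee_sum (q : ℕ) {ι : Type*} (s : Finset ι) (g : ι → ℤ) :
    ee q (∑ i ∈ s, g i) = ∏ i ∈ s, ee q (g i) := by
  induction s using Finset.cons_induction with
  | empty => simp [ee_zero]
  | cons a s ha ih => rw [Finset.sum_cons, Finset.prod_cons, ee_add, ih]

lemma ee_q (q : ℕ) (hq : q ≠ 0) : ee q (q : ℤ) = -1 := by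
  have hq' : (q : ℂ) ≠ 0 := by exact_mod_cast hq
  rw [ee]
  rw [show ((Real.pi : ℂ) * Complex.I * ((q : ℤ) : ℂ) / q) = (Real.pi : ℂ) * Complex.I by
    push_cast; field_simp]
  exact Complex.exp_pi_mul_I

lemma ee_eq_one_iff (q : ℕ) (hq : q ≠ 0) (m : ℤ) : ee q (2 * m) = 1 ↔ (q : ℤ) ∣ m := by
  have hq' : (q : ℂ) ≠ 0 := by exact_mod_cast hq
  have hπ : (Real.pi : ℂ) ≠ 0 := by exact_mod_cast Real.pi_ne_zero
  rw [ee, Complex.exp_eq_one_iff]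
  constructor
  · rintro ⟨k, hk⟩
    have : (m : ℂ) = k * q := by
      field_simp at hk
      have h2 : (2 : ℂ) * Real.pi * Complex.I ≠ 0 := by
        simp [Complex.I_ne_zero, Real.pi_ne_zero, Complex.ofReal_ne_zero]
      refine mul_left_cancel₀ h2 ?_
      push_cast at hk
      linear_combination (Real.pi * Complex.I) * hk
    have : (m:ℤ) = k * q := by exact_mod_cast this
    exact ⟨k, by linarith⟩
  · rintro ⟨k, rfl⟩
    exact ⟨k, by push_cast; field_simp⟩

lemma sum_val_eq (q : ℕ) [NeZero q] (g : ℕ → ℂ) :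
    ∑ c : ZMod q, g c.val = ∑ j ∈ range q, g j := by
  obtain ⟨k, rfl⟩ := Nat.exists_eq_succ_of_ne_zero (NeZero.ne q)
  exact Fin.sum_univ_eq_sum_range (fun j => g j) (k + 1)

lemma geom_zmod (q : ℕ) [NeZero q] (m : ℤ) :
    ∑ c : ZMod q, ee q (2 * m * c.val) = if (q : ℤ) ∣ m then (q : ℂ) else 0 := by
  have hq := NeZero.ne q
  have h1 : ∀ c : ZMod q, ee q (2 * m * c.val) = ee q (2 * m) ^ c.val :=
    fun c => ee_nat_mul q (2 * m) c.val
  simp only [h1]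
  rw [sum_val_eq q (fun j => ee q (2 * m) ^ j)]
  by_cases h : (q : ℤ) ∣ m
  · rw [if_pos h]
    have : ee q (2 * m) = 1 := (ee_eq_one_iff q hq m).2 h
    simp [this]
  · rw [if_neg h]
    have hz1 : ee q (2 * m) ≠ 1 := fun hc => h ((ee_eq_one_iff q hq m).1 hc)
    rw [geom_sum_eq hz1]
    have : ee q (2 * m) ^ q = 1 := by
      rw [← ee_nat_mul, show (2 * m * (q : ℕ) : ℤ) = 2 * q * m by push_cast; ring,
        ee_two_pi q hq]
    rw [this, sub_self, zero_div]

lemma orth (q n : ℕ) [NeZero q] (m : Fin n → ℤ) :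
    ∑ v : Fin n → ZMod q, ∏ i, ee q (2 * m i * (v i).val)
      = if ∀ i, (q : ℤ) ∣ m i then ((q : ℂ)) ^ n else 0 := by
  rw [← Fintype.piFinset_univ, ← Finset.prod_univ_sum (fun _ => (univ : Finset (ZMod q)))
    (fun i c => ee q (2 * m i * c.val))]
  simp only [geom_zmod]
  by_cases h : ∀ i, (q : ℤ) ∣ m i
  · simp [h, Finset.prod_const, Finset.card_univ]
  · rw [if_neg h]
    push_neg at h
    obtain ⟨i, hi⟩ := h
    exact Finset.prod_eq_zero (mem_univ i) (by rw [if_neg hi])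

lemma omg_pow (q : ℕ) (m : ℕ) : omg q ^ m = ee q m := by
  rw [omg, ee, ← Complex.exp_nat_mul]
  congr 1
  push_cast
  ring

lemma xiq_pow (q : ℕ) (m : ℕ) : xiq q ^ m = ee q (2 * m) := by
  rw [xiq, ee, ← Complex.exp_nat_mul]
  congr 1
  push_cast
  ring

lemma dvd_iff_eq (q : ℕ) [NeZero q] (a b : ZMod q) :
    (q : ℤ) ∣ ((a.val : ℤ) - b.val) ↔ a = b := by
  rw [← ZMod.intCast_zmod_eq_zero_iff_dvd]
  push_cast
  rw [ZMod.natCast_val, ZMod.natCast_val, ZMod.cast_id, ZMod.cast_id, sub_eq_zero]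

lemma cond_iff (q n : ℕ) [NeZero q] (x y v : Fin n → ZMod q) :
    (∀ i, (q : ℤ) ∣ ((x i).val - (y i).val + (v i).val : ℤ)) ↔ y = x + v := by
  constructor
  · intro h
    funext i
    have := (ZMod.intCast_zmod_eq_zero_iff_dvd _ q).2 (h i)
    push_cast [ZMod.natCast_val, ZMod.cast_id] at this
    have := sub_eq_zero.1 (by linear_combination this : (x i + v i) - y i = 0)
    simp [this, Pi.add_apply]
  · rintro rfl i
    rw [← ZMod.intCast_zmod_eq_zero_iff_dvd]
    push_cast [ZMod.natCast_val, ZMod.cast_id]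
    simp [Pi.add_apply]

noncomputable def Sf (q n : ℕ) [NeZero q] (f : (Fin n → ZMod q) → ZMod (2 * q))
    (u : Fin n → ZMod q) : ℂ :=
  ∑ x : Fin n → ZMod q,
    ee q ((f x).val) * ee q (2 * (∑ i, (x i).val * (u i).val : ℕ)) *
      ee q ((∑ i, (x i).val : ℕ))

lemma val_sub_decomp (q : ℕ) [NeZero q] (a b : ZMod q) :
    ((a.val : ℤ)) - ((a + b).val : ℤ)
      = -(b.val : ℤ) + q * (if q ≤ a.val + b.val then 1 else 0) := by
  have hx := ZMod.val_lt a
  have hv := ZMod.val_lt b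
  rw [ZMod.val_add]
  by_cases h : q ≤ a.val + b.val
  · rw [if_pos h]
    have : (a.val + b.val) % q = a.val + b.val - q := by
      rw [Nat.mod_eq_sub_mod h]
      exact Nat.mod_eq_of_lt (by omega)
    rw [this]
    rw [Nat.cast_sub h]
    push_cast
    ring
  · rw [if_neg h]
    have : (a.val + b.val) % q = a.val + b.val := Nat.mod_eq_of_lt (by omega)
    rw [this]
    push_cast
    omega

lemma sum_val_sub (q n : ℕ) [NeZero q] (x v : Fin n → ZMod q) :
    (∑ i, ((x i).val : ℤ)) - ∑ i, (((x + v) i).val : ℤ)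
      = -(∑ i, ((v i).val : ℤ))
        + q * ((Finset.univ.filter (fun i => q ≤ (x i).val + (v i).val)).card : ℤ) := by
  have h1 : ∀ i : Fin n, ((x i).val : ℤ) - (((x + v) i).val : ℤ)
      = -((v i).val : ℤ) + q * (if q ≤ (x i).val + (v i).val then 1 else 0) := by
    intro i
    simpa using val_sub_decomp q (x i) (v i)
  rw [← Finset.sum_sub_distrib]
  simp only [h1]
  rw [Finset.sum_add_distrib, ← Finset.mul_sum, Finset.sum_neg_distrib]
  congr 2
  rw [Finset.card_filter]
  push_cast
  simp

lemma keyA (q n : ℕ) [NeZero q] (f : (Fin n → ZMod q) → ZMod (2 * q))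
    (v : Fin n → ZMod q) :
    ∑ u : Fin n → ZMod q,
        Sf q n f u * (starRingEnd ℂ) (Sf q n f u) *
          ee q (2 * (∑ i, (v i).val * (u i).val : ℕ))
      = (q : ℂ) ^ n * ee q (-(∑ i, ((v i).val : ℤ))) * negaCC q n f f v := by
  have hq := NeZero.ne q
  have h2q : NeZero (2 * q) := ⟨mul_ne_zero two_ne_zero hq⟩
  -- step 1: expand the square of sums and sum over u using orthogonality
  have step1 : ∀ u : Fin n → ZMod q,
      Sf q n f u * (starRingEnd ℂ) (Sf q n f u) *
          ee q (2 * (∑ i, (v i).val * (u i).val : ℕ))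
        = ∑ x : Fin n → ZMod q, ∑ y : Fin n → ZMod q,
            ee q (((f x).val : ℤ) - ((f y).val : ℤ)
                + ((∑ i, (x i).val : ℕ) - ((∑ i, (y i).val : ℕ) : ℤ)))
              * ∏ i, ee q (2 * (((x i).val : ℤ) - ((y i).val : ℤ) + ((v i).val : ℤ))
                  * (u i).val) := by
    intro u
    rw [Sf, map_sum]
    rw [Finset.sum_mul_sum, Finset.sum_mul]
    refine Finset.sum_congr rfl fun x _ => ?_
    rw [Finset.sum_mul]
    refine Finset.sum_congr rfl fun y _ => ?_
    simp only [map_mul, conj_ee]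
    rw [← ee_sum]
    simp only [← ee_add]
    congr 1
    push_cast
    rw [Finset.mul_sum, Finset.mul_sum, Finset.mul_sum]
    rw [Finset.sum_congr rfl (fun i (_ : i ∈ Finset.univ) =>
      (by ring : (2:ℤ) * (((x i).val:ℤ) - ((y i).val:ℤ) + ((v i).val:ℤ)) * ((u i).val:ℤ)
        = 2 * (((x i).val:ℤ) * ((u i).val:ℤ)) - 2 * (((y i).val:ℤ) * ((u i).val:ℤ))
          + 2 * (((v i).val:ℤ) * ((u i).val:ℤ))))]
    rw [Finset.sum_add_distrib, Finset.sum_sub_distrib]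
    ring
  simp only [step1]
  rw [Finset.sum_comm]
  -- now swap u and y sums and apply orthogonality
  have step2 : ∀ x : Fin n → ZMod q,
      ∑ u : Fin n → ZMod q, ∑ y : Fin n → ZMod q,
          ee q (((f x).val : ℤ) - ((f y).val : ℤ)
              + ((∑ i, (x i).val : ℕ) - ((∑ i, (y i).val : ℕ) : ℤ)))
            * ∏ i, ee q (2 * (((x i).val : ℤ) - ((y i).val : ℤ) + ((v i).val : ℤ))
                * (u i).val)
        = (q : ℂ) ^ n * (ee q (-(∑ i, ((v i).val : ℤ)))
            * (ee q (((f x - f (x + v)).val : ℕ))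
              * (-1 : ℂ) ^ (Finset.univ.filter
                  (fun i => q ≤ (x i).val + (v i).val)).card)) := by
    intro x
    rw [Finset.sum_comm]
    have collapse : ∀ y : Fin n → ZMod q,
        ∑ u : Fin n → ZMod q,
            ee q (((f x).val : ℤ) - ((f y).val : ℤ)
                + ((∑ i, (x i).val : ℕ) - ((∑ i, (y i).val : ℕ) : ℤ)))
              * ∏ i, ee q (2 * (((x i).val : ℤ) - ((y i).val : ℤ) + ((v i).val : ℤ))
                  * (u i).val)
          = if y = x + v then
              ee q (((f x).val : ℤ) - ((f y).val : ℤ)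
                + ((∑ i, (x i).val : ℕ) - ((∑ i, (y i).val : ℕ) : ℤ))) * (q : ℂ) ^ n
            else 0 := by
      intro y
      rw [← Finset.mul_sum, orth q n (fun i => ((x i).val : ℤ) - ((y i).val : ℤ) + ((v i).val : ℤ))]
      by_cases h : y = x + v
      · rw [if_pos ((cond_iff q n x y v).2 h), if_pos h]
      · rw [if_neg (fun hc => h ((cond_iff q n x y v).1 hc)), if_neg h, mul_zero]
    simp only [collapse]
    rw [Finset.sum_ite_eq' Finset.univ (x + v)]
    rw [if_pos (Finset.mem_univ _)]
    -- identify the exponent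
    have hfe : ee q (((f x).val : ℤ) - ((f (x + v)).val : ℤ)
          + ((∑ i, (x i).val : ℕ) - ((∑ i, ((x + v) i).val : ℕ) : ℤ)))
        = ee q (-(∑ i, ((v i).val : ℤ)))
          * (ee q (((f x - f (x + v)).val : ℕ))
            * (-1 : ℂ) ^ (Finset.univ.filter (fun i => q ≤ (x i).val + (v i).val)).card) := by
      have hsum : ((∑ i, (x i).val : ℕ) : ℤ) - ((∑ i, ((x + v) i).val : ℕ) : ℤ)
          = -(∑ i, ((v i).val : ℤ))
            + q * ((Finset.univ.filter (fun i => q ≤ (x i).val + (v i).val)).card : ℤ) := by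
        push_cast
        exact sum_val_sub q n x v
      have hf : ee q (((f x).val : ℤ) - ((f (x + v)).val : ℤ))
          = ee q (((f x - f (x + v)).val : ℕ)) := by
        refine ee_dvd_eq q hq ?_
        have : ((((f x).val : ℤ) - ((f (x + v)).val : ℤ)
            - ((f x - f (x + v)).val : ℕ) : ℤ) : ZMod (2 * q)) = 0 := by
          push_cast [ZMod.natCast_val, ZMod.cast_id]
          ring
        have := (ZMod.intCast_zmod_eq_zero_iff_dvd _ (2 * q)).1 this
        push_cast at this ⊢
        exact this
      rw [ee_add, hsum, ee_add, hf]
      have : ee q ((q : ℤ) * ((Finset.univ.filter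
          (fun i => q ≤ (x i).val + (v i).val)).card : ℕ))
          = (-1 : ℂ) ^ (Finset.univ.filter (fun i => q ≤ (x i).val + (v i).val)).card := by
        rw [ee_nat_mul, ee_q q hq]
      rw [show ((q : ℤ) * ((Finset.univ.filter
          (fun i => q ≤ (x i).val + (v i).val)).card : ℤ))
          = ((q : ℤ) * ((Finset.univ.filter
          (fun i => q ≤ (x i).val + (v i).val)).card : ℕ)) by push_cast; ring, this]
      ring
    rw [hfe]
    ring
  simp only [step2]
  rw [← Finset.mul_sum, ← Finset.mul_sum, negaCC]
  simp only [omg_pow]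
  ring

lemma orth_v (q n : ℕ) [NeZero q] (v : Fin n → ZMod q) :
    ∑ u : Fin n → ZMod q, ee q (2 * (∑ i, (v i).val * (u i).val : ℕ))
      = if v = 0 then (q : ℂ) ^ n else 0 := by
  have hterm : ∀ u : Fin n → ZMod q,
      ee q (2 * (∑ i, (v i).val * (u i).val : ℕ))
        = ∏ i, ee q (2 * ((v i).val : ℤ) * (u i).val) := by
    intro u
    rw [← ee_sum]
    congr 1
    push_cast
    rw [Finset.mul_sum]
    exact Finset.sum_congr rfl fun i _ => by ring
  simp only [hterm]
  rw [orth]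
  have hcond : (∀ i, (q : ℤ) ∣ ((v i).val : ℤ)) ↔ v = 0 := by
    constructor
    · intro h
      funext i
      have := (dvd_iff_eq q (v i) 0).1 (by simpa using h i)
      simpa using this
    · rintro rfl i
      simp
  by_cases hv : v = 0
  · rw [if_pos (hcond.2 hv), if_pos hv]
  · rw [if_neg (fun hc => hv (hcond.1 hc)), if_neg hv]

lemma orth_uw (q n : ℕ) [NeZero q] (u w : Fin n → ZMod q) :
    ∑ v : Fin n → ZMod q,
        ee q (2 * (∑ i, (v i).val * (u i).val : ℕ)) *
          ee q (-(2 * (∑ i, (v i).val * (w i).val : ℕ)))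
      = if u = w then (q : ℂ) ^ n else 0 := by
  have hterm : ∀ v : Fin n → ZMod q,
      ee q (2 * (∑ i, (v i).val * (u i).val : ℕ)) *
          ee q (-(2 * (∑ i, (v i).val * (w i).val : ℕ)))
        = ∏ i, ee q (2 * (((u i).val : ℤ) - ((w i).val : ℤ)) * (v i).val) := by
    intro v
    rw [← ee_add, ← ee_sum]
    congr 1
    push_cast
    rw [Finset.mul_sum, Finset.mul_sum]
    rw [Finset.sum_congr rfl (fun i (_ : i ∈ Finset.univ) =>
      (by ring : (2:ℤ) * (((u i).val:ℤ) - ((w i).val:ℤ)) * ((v i).val:ℤ)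
        = 2 * (((v i).val:ℤ) * ((u i).val:ℤ)) - 2 * (((v i).val:ℤ) * ((w i).val:ℤ))))]
    rw [Finset.sum_sub_distrib]
    ring
  simp only [hterm]
  rw [orth]
  have hcond : (∀ i, (q : ℤ) ∣ (((u i).val : ℤ) - ((w i).val : ℤ))) ↔ u = w := by
    constructor
    · intro h
      funext i
      exact (dvd_iff_eq q (u i) (w i)).1 (h i)
    · rintro rfl i
      simp
  by_cases huw : u = w
  · rw [if_pos (hcond.2 huw), if_pos huw]
  · rw [if_neg (fun hc => huw (hcond.1 hc)), if_neg huw]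

lemma negaCC_zero (q n : ℕ) [NeZero q] (f : (Fin n → ZMod q) → ZMod (2 * q)) :
    negaCC q n f f 0 = (q : ℂ) ^ n := by
  have h2q : NeZero (2 * q) := ⟨mul_ne_zero two_ne_zero (NeZero.ne q)⟩
  have hterm : ∀ x : Fin n → ZMod q,
      omg q ^ (f x - f (x + 0)).val *
        (-1 : ℂ) ^ (Finset.univ.filter
          (fun i => q ≤ (x i).val + ((0 : Fin n → ZMod q) i).val)).card = 1 := by
    intro x
    have h1 : f x - f (x + 0) = 0 := by rw [add_zero, sub_self]
    have h2 : (Finset.univ.filter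
        (fun i => q ≤ (x i).val + ((0 : Fin n → ZMod q) i).val)).card = 0 := by
      rw [Finset.card_eq_zero, Finset.filter_eq_empty_iff]
      intro i _
      simp only [Pi.zero_apply, ZMod.val_zero, add_zero, not_le]
      exact ZMod.val_lt (x i)
    rw [h1, h2, ZMod.val_zero, pow_zero, pow_zero, mul_one]
  rw [negaCC]
  simp only [hterm]
  rw [Finset.sum_const, Finset.card_univ]
  simp [ZMod.card]

theorem negabent_iff_negaAC (q n : ℕ) [NeZero q] (hq : 2 ≤ q) (hn : 1 ≤ n)
    (f : (Fin n → ZMod q) → ZMod (2 * q)) :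
    (∀ u : Fin n → ZMod q, ‖NHT q n f u‖ = 1) ↔
      (∀ u : Fin n → ZMod q, u ≠ 0 → negaCC q n f f u = 0) := by
  have hq0 := NeZero.ne q
  have hqR : (0 : ℝ) < (q : ℝ) ^ n := by positivity
  have hrpos : 0 < Real.sqrt ((q : ℝ) ^ n) := Real.sqrt_pos.2 hqR
  have hr2 : Real.sqrt ((q : ℝ) ^ n) ^ 2 = (q : ℝ) ^ n := Real.sq_sqrt hqR.le
  have hqn : ((q : ℂ) ^ n) ≠ 0 := pow_ne_zero _ (Nat.cast_ne_zero.2 hq0)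
  have hNeq : ∀ u, NHT q n f u = ((Real.sqrt ((q : ℝ) ^ n) : ℝ) : ℂ)⁻¹ * Sf q n f u := by
    intro u
    rw [NHT, Sf]
    congr 1
    exact Finset.sum_congr rfl fun x _ => by rw [omg_pow, xiq_pow, omg_pow]
  have habs : ∀ u, ‖NHT q n f u‖
      = (Real.sqrt ((q : ℝ) ^ n))⁻¹ * ‖Sf q n f u‖ := by
    intro u
    rw [hNeq, norm_mul, norm_inv, Complex.norm_real, Real.norm_of_nonneg hrpos.le]
  constructor
  · intro H v hv
    have hS : ∀ u, Sf q n f u * (starRingEnd ℂ) (Sf q n f u) = (q : ℂ) ^ n := by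
      intro u
      have h1 : ‖Sf q n f u‖ = Real.sqrt ((q : ℝ) ^ n) := by
        have h := H u
        rw [habs u] at h
        exact ((inv_mul_eq_one₀ hrpos.ne').1 h).symm
      rw [Complex.mul_conj, Complex.normSq_eq_norm_sq, h1, hr2]
      push_cast
      ring
    have hA := keyA q n f v
    simp only [hS] at hA
    rw [← Finset.mul_sum, orth_v, if_neg hv, mul_zero] at hA
    have h0 : (q : ℂ) ^ n * ee q (-(∑ i, ((v i).val : ℤ))) ≠ 0 :=
      mul_ne_zero hqn (ee_ne_zero q _)
    exact ((mul_eq_zero.1 hA.symm).resolve_left (mul_ne_zero hqn (ee_ne_zero q _)))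
  · intro hC w
    set r := Real.sqrt ((q : ℝ) ^ n) with hr
    have way1 :
        ∑ v : Fin n → ZMod q,
            (∑ u : Fin n → ZMod q,
              Sf q n f u * (starRingEnd ℂ) (Sf q n f u) *
                ee q (2 * (∑ i, (v i).val * (u i).val : ℕ))) *
              ee q (-(2 * (∑ i, (v i).val * (w i).val : ℕ)))
          = (q : ℂ) ^ n * (q : ℂ) ^ n := by
      have h1 : ∀ v : Fin n → ZMod q,
          (∑ u : Fin n → ZMod q,
              Sf q n f u * (starRingEnd ℂ) (Sf q n f u) *
                ee q (2 * (∑ i, (v i).val * (u i).val : ℕ))) *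
              ee q (-(2 * (∑ i, (v i).val * (w i).val : ℕ)))
            = ((q : ℂ) ^ n * ee q (-(∑ i, ((v i).val : ℤ))) * negaCC q n f f v) *
              ee q (-(2 * (∑ i, (v i).val * (w i).val : ℕ))) := by
        intro v
        rw [keyA]
      simp only [h1]
      rw [Finset.sum_eq_single (0 : Fin n → ZMod q)]
      · simp only [Pi.zero_apply, ZMod.val_zero, Nat.cast_zero, Finset.sum_const_zero,
          neg_zero, ee_zero, zero_mul, Finset.sum_const_zero, mul_zero, mul_one]
        rw [negaCC_zero]
      · intro v _ hv
        rw [hC v hv]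
        ring
      · intro h
        exact absurd (Finset.mem_univ _) h
    have way2 :
        ∑ v : Fin n → ZMod q,
            (∑ u : Fin n → ZMod q,
              Sf q n f u * (starRingEnd ℂ) (Sf q n f u) *
                ee q (2 * (∑ i, (v i).val * (u i).val : ℕ))) *
              ee q (-(2 * (∑ i, (v i).val * (w i).val : ℕ)))
          = (q : ℂ) ^ n * (Sf q n f w * (starRingEnd ℂ) (Sf q n f w)) := by
      simp only [Finset.sum_mul]
      rw [Finset.sum_comm]
      have h2 : ∀ u : Fin n → ZMod q,
          ∑ v : Fin n → ZMod q,
              Sf q n f u * (starRingEnd ℂ) (Sf q n f u) *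
                  ee q (2 * (∑ i, (v i).val * (u i).val : ℕ)) *
                ee q (-(2 * (∑ i, (v i).val * (w i).val : ℕ)))
            = Sf q n f u * (starRingEnd ℂ) (Sf q n f u) *
                (if u = w then (q : ℂ) ^ n else 0) := by
        intro u
        rw [← orth_uw q n u w, Finset.mul_sum]
        exact Finset.sum_congr rfl fun v _ => by ring
      simp only [h2, mul_ite, mul_zero]
      rw [Finset.sum_ite_eq' Finset.univ w, if_pos (Finset.mem_univ _)]
      ring
    have hSw : Sf q n f w * (starRingEnd ℂ) (Sf q n f w) = (q : ℂ) ^ n :=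
      mul_left_cancel₀ hqn (way2.symm.trans way1)
    have hnorm : Complex.normSq (Sf q n f w) = (q : ℝ) ^ n := by
      have : ((Complex.normSq (Sf q n f w) : ℝ) : ℂ) = (((q : ℝ) ^ n : ℝ) : ℂ) := by
        rw [← Complex.mul_conj, hSw]
        push_cast
        ring
      exact_mod_cast this
    have habsS : ‖Sf q n f w‖ = r := by
      rw [← Real.sqrt_sq (norm_nonneg _), ← Complex.normSq_eq_norm_sq, hnorm]
    rw [habs w, habsS]
    exact inv_mul_cancel₀ hrpos.ne'
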